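/- With the frequency distribution of length-n factors of the Fibonacci word as above (probabilities τᵏ, τ^{k−1}, τ^{k−2} with multiplicities n−f_{k−1}+1, n−f_{k−2}+1, f_k−n−1 for f_{k−1} ≤ n ≤ f_k−1), the Shannon entropy S(n) = −Σ ν log ν satisfies S(n) = log n + Θ(1); in particular there exist constants c₁, c₂ such that log n + c₁ ≤ S(n) ≤ log n + c₂ for all sufficiently large n. -/

import Mathlib

/-- The entanglement entropy of a length-n region of the Fibonacci code state,
for the unique k with f_{k−1} ≤ n ≤ f_k − 1 (f_j = Nat.fib (j+1)),
computed from the factor-frequency distribution. -/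
noncomputable def fibEntropy (n k : ℕ) : ℝ :=
  let τ : ℝ := (Real.sqrt 5 - 1) / 2
  (((n : ℝ) - Nat.fib k + 1) * k * τ ^ k
      + ((n : ℝ) - Nat.fib (k - 1) + 1) * (k - 1 : ℝ) * τ ^ (k - 1)
      + ((Nat.fib (k + 1) : ℝ) - n - 1) * (k - 2 : ℝ) * τ ^ (k - 2))
    * Real.log (1 / τ)

namespace FibEnt


noncomputable def φ : ℝ := (1 + Real.sqrt 5) / 2
noncomputable def τ : ℝ := (Real.sqrt 5 - 1) / 2

lemma hs : Real.sqrt 5 ^ 2 = 5 := Real.sq_sqrt (by norm_num)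
lemma hs2 : 2 ≤ Real.sqrt 5 := by nlinarith [hs, Real.sqrt_nonneg 5]
lemma hs3 : Real.sqrt 5 ≤ 3 := by nlinarith [hs, Real.sqrt_nonneg 5]

lemma hτ0 : 0 < τ := by unfold τ; nlinarith [hs2]
lemma hφ1 : 1 < φ := by unfold φ; nlinarith [hs2]
lemma hφ2 : φ ≤ 2 := by unfold φ; nlinarith [hs3]
lemma hτφ : τ * φ = 1 := by unfold τ φ; nlinarith [hs]
lemma hφτ : φ = 1 + τ := by unfold τ φ; ring
lemma hτ2 : τ ^ 2 = 1 - τ := by unfold τ; nlinarith [hs]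
lemma hφ0 : 0 < φ := lt_trans one_pos hφ1
lemma h1τ : 1 / τ = φ := by
  rw [div_eq_iff hτ0.ne']
  linarith [hτφ]

lemma hφsq : φ ^ 2 = φ + 1 := by linear_combination φ * hφτ + hτφ

lemma fib_le_pow : ∀ m : ℕ, (Nat.fib (m+1) : ℝ) ≤ φ ^ m ∧ (Nat.fib (m+2) : ℝ) ≤ φ ^ (m+1)
  | 0 => ⟨by norm_num, by norm_num [hφ1.le]⟩
  | (m+1) => by
    obtain ⟨h1, h2⟩ := fib_le_pow m
    refine ⟨h2, ?_⟩
    have hrec : (Nat.fib (m+3) : ℝ) = Nat.fib (m+2) + Nat.fib (m+1) := by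
      have := Nat.fib_add_two (n := m+1); push_cast [this]; ring
    have hp : φ ^ (m+2) = φ ^ (m+1) + φ ^ m := by
      linear_combination (φ ^ m) * hφsq
    rw [hrec, hp]; linarith

lemma pow_le_fib : ∀ m : ℕ, φ ^ m ≤ (Nat.fib (m+2) : ℝ) ∧ φ ^ (m+1) ≤ (Nat.fib (m+3) : ℝ)
  | 0 => by
    constructor
    · simp
    · simpa [show Nat.fib 3 = 2 from rfl] using hφ2
  | (m+1) => by
    obtain ⟨h1, h2⟩ := pow_le_fib m
    refine ⟨h2, ?_⟩
    have hrec : (Nat.fib (m+4) : ℝ) = Nat.fib (m+3) + Nat.fib (m+2) := by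
      have := Nat.fib_add_two (n := m+2); push_cast [this]; ring
    have hp : φ ^ (m+2) = φ ^ (m+1) + φ ^ m := by
      linear_combination (φ ^ m) * hφsq
    rw [hrec, hp]; linarith

lemma fib_tau : ∀ m : ℕ, (Nat.fib (m+1) : ℝ) + Nat.fib m * τ = φ ^ m
  | 0 => by simp
  | (m+1) => by
    have ih := fib_tau m
    have hrec : (Nat.fib (m+2) : ℝ) = Nat.fib (m+1) + Nat.fib m := by
      have := Nat.fib_add_two (n := m); push_cast [this]; ring
    have hp : φ ^ (m+1) = φ * φ ^ m := by ring
    rw [hrec, hp, ← ih]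
    linear_combination (Nat.fib (m+1) : ℝ) * hφτ.symm - (Nat.fib m : ℝ) * hτφ


lemma hτdef : τ = (Real.sqrt 5 - 1) / 2 := rfl

lemma entropy_eq (n m : ℕ) :
    fibEntropy n (m+2) =
      ((m : ℝ) + 2 - ((n : ℝ) - Nat.fib (m+1) + 1) * τ ^ (m+1)
        - 2 * ((Nat.fib (m+3) : ℝ) - n - 1) * τ ^ m) * Real.log φ := by
  have hidx1 : m + 2 - 1 = m + 1 := by omega
  have hidx2 : m + 2 - 2 = m := by omega
  have hrec1 : (Nat.fib (m+3) : ℝ) = Nat.fib (m+2) + Nat.fib (m+1) := by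
    have := Nat.fib_add_two (n := m+1); push_cast [this]; ring
  have hrec2 : (Nat.fib (m+2) : ℝ) = Nat.fib (m+1) + Nat.fib m := by
    have := Nat.fib_add_two (n := m); push_cast [this]; ring
  have hft := fib_tau m
  have hpow : τ ^ m * φ ^ m = 1 := by rw [← mul_pow, hτφ, one_pow]
  have e1 : τ ^ (m+2) = τ ^ m * τ ^ 2 := by ring
  have e2 : τ ^ (m+1) = τ ^ m * τ := by ring
  have hS : ((n : ℝ) - Nat.fib (m+2) + 1) * τ ^ (m+2)
      + ((n : ℝ) - Nat.fib (m+1) + 1) * τ ^ (m+1)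
      + ((Nat.fib (m+3) : ℝ) - n - 1) * τ ^ m = 1 := by
    rw [e1, e2]
    linear_combination (((n : ℝ) - Nat.fib (m+2) + 1) * τ ^ m) * hτ2
      + (τ ^ m) * hrec1 + (τ ^ m * τ) * hrec2 + (τ ^ m) * hft + hpow
  simp only [fibEntropy, hidx1, hidx2, ← hτdef, h1τ]
  push_cast
  linear_combination (((m : ℝ) + 2) * Real.log φ) * hS

end FibEnt

open FibEnt in
/-- S(n) = log n + Θ(1): there are constants c₁, c₂ with
log n + c₁ ≤ S(n) ≤ log n + c₂ for all sufficiently large n. -/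
theorem fib_entropy_log_asymptotics :
    ∃ c₁ c₂ : ℝ, ∃ N : ℕ, ∀ n ≥ N, ∀ k : ℕ, 2 ≤ k →
      Nat.fib k ≤ n → n ≤ Nat.fib (k + 1) - 1 →
      Real.log n + c₁ ≤ fibEntropy n k ∧ fibEntropy n k ≤ Real.log n + c₂ := by
  refine ⟨-3 * Real.log φ, 2 * Real.log φ, 1, ?_⟩
  intro n hn k hk hkn hnk
  obtain ⟨m, rfl⟩ : ∃ m, k = m + 2 := ⟨k - 2, by omega⟩
  have hlogφ : 0 < Real.log φ := Real.log_pos hφ1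
  have hτpos : ∀ j : ℕ, (0:ℝ) < τ ^ j := fun j => pow_pos hτ0 j
  have hφpos : ∀ j : ℕ, (0:ℝ) < φ ^ j := fun j => pow_pos hφ0 j
  have hτφp : ∀ j : ℕ, τ ^ j * φ ^ j = 1 := fun j => by rw [← mul_pow, hτφ, one_pow]
  -- numeric facts about n
  have hfibpos : 0 < Nat.fib (m+3) := Nat.fib_pos.mpr (by omega)
  have hnk' : n ≤ Nat.fib (m+3) - 1 := hnk
  have hn3 : n + 1 ≤ Nat.fib (m+3) := by omega
  have hmono : Nat.fib (m+1) ≤ Nat.fib (m+2) := Nat.fib_le_fib_succ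
  have hnpos : 0 < n := lt_of_lt_of_le (Nat.fib_pos.mpr (by omega)) hkn
  -- real versions
  have hknR : (Nat.fib (m+2) : ℝ) ≤ n := by exact_mod_cast hkn
  have hn3R : (n : ℝ) + 1 ≤ Nat.fib (m+3) := by exact_mod_cast hn3
  have hmonoR : (Nat.fib (m+1) : ℝ) ≤ Nat.fib (m+2) := by exact_mod_cast hmono
  rw [entropy_eq n m]
  -- bounds on B := n - fib(m+1) + 1
  set B : ℝ := (n : ℝ) - Nat.fib (m+1) + 1 with hB
  have hB0 : 0 ≤ B := by simp only [hB]; linarith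
  have hBfib : B ≤ Nat.fib (m+2) := by
    have hrec : (Nat.fib (m+3) : ℝ) = Nat.fib (m+2) + Nat.fib (m+1) := by
      have := Nat.fib_add_two (n := m+1); push_cast [this]; ring
    simp only [hB]; linarith
  have hX1 : B * τ ^ (m+1) ≤ 1 := by
    calc B * τ ^ (m+1) ≤ φ ^ (m+1) * τ ^ (m+1) :=
          mul_le_mul_of_nonneg_right (hBfib.trans (fib_le_pow (m+1)).1) (hτpos (m+1)).le
      _ = 1 := by rw [mul_comm]; exact hτφp (m+1)
  have hX0 : 0 ≤ B * τ ^ (m+1) := mul_nonneg hB0 (hτpos (m+1)).le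
  -- bounds on C := fib(m+3) - n - 1
  set C : ℝ := (Nat.fib (m+3) : ℝ) - n - 1 with hC
  have hC0 : 0 ≤ C := by simp only [hC]; linarith
  have hCfib : C ≤ φ ^ m := by
    have h1 : C ≤ (Nat.fib (m+1) : ℝ) := by
      have hrec : (Nat.fib (m+3) : ℝ) = Nat.fib (m+2) + Nat.fib (m+1) := by
        have := Nat.fib_add_two (n := m+1); push_cast [this]; ring
      simp only [hC]; linarith
    exact h1.trans (fib_le_pow m).1
  have hY1 : C * τ ^ m ≤ 1 := by
    calc C * τ ^ m ≤ φ ^ m * τ ^ m := mul_le_mul_of_nonneg_right hCfib (hτpos m).le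
      _ = 1 := by rw [mul_comm]; exact hτφp m
  have hY0 : 0 ≤ C * τ ^ m := mul_nonneg hC0 (hτpos m).le
  -- log n bounds
  have hlog_lo : (m : ℝ) * Real.log φ ≤ Real.log n := by
    rw [← Real.log_pow]
    exact Real.log_le_log (hφpos m) ((pow_le_fib m).1.trans hknR)
  have hlog_hi : Real.log n ≤ ((m : ℝ) + 2) * Real.log φ := by
    have h1 : (n : ℝ) ≤ φ ^ (m+2) := by
      have := (fib_le_pow (m+2)).1
      linarith
    calc Real.log n ≤ Real.log (φ ^ (m+2)) :=
          Real.log_le_log (by exact_mod_cast hnpos) h1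
      _ = ((m : ℝ) + 2) * Real.log φ := by rw [Real.log_pow]; push_cast; ring
  constructor
  · have h : ((m : ℝ) - 1) * Real.log φ ≤
        ((m : ℝ) + 2 - B * τ ^ (m+1) - 2 * C * τ ^ m) * Real.log φ := by
      apply mul_le_mul_of_nonneg_right _ hlogφ.le
      nlinarith
    nlinarith
  · have h : ((m : ℝ) + 2 - B * τ ^ (m+1) - 2 * C * τ ^ m) * Real.log φ ≤
        ((m : ℝ) + 2) * Real.log φ := by
      apply mul_le_mul_of_nonneg_right _ hlogφ.le
      nlinarith
    nlinarith
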